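/- Let G = (V, E) be a finite simple graph, r ∈ V, and R ≥ 1 an integer. Let G' be the graph on vertex set (V \ {r}) ∪ {r_1, …, r_R} in which two vertices of V \ {r} are adjacent iff they are adjacent in G, each r_i is adjacent to v ∈ V \ {r} iff r is adjacent to v in G, and no two r_i are adjacent; let π map each edge of G' to the edge of G obtained by replacing any r_i by r. Then for a set F ⊆ E of edges of G, the following are equivalent: (a) no two distinct edges of F share a vertex other than r, and at most R edges of F contain r; (b) there exists a matching M of G' such that π restricted to M is injective with image F. -/

import Mathlib

/-- Vertex type of the eNB-expanded graph: the vertices other than the eNB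
`r`, together with `R` expanded copies `r_1, …, r_R` of `r`. -/
abbrev ExpVert (V : Type*) (r : V) (R : ℕ) : Type _ := {v : V // v ≠ r} ⊕ Fin R

/-- Projection `π` from expanded vertices back to original vertices: each
expanded eNB `r_i` is mapped back to `r`. -/
def expProj {V : Type*} {r : V} {R : ℕ} : ExpVert V r R → V :=
  Sum.elim (fun v => v.1) (fun _ => r)

/-- The eNB-expanded graph `G'`: two vertices of `V \ {r}` are adjacent iff
they are adjacent in `G`, each `r_i` is adjacent to `v ∈ V \ {r}` iff `r` is
adjacent to `v` in `G`, and no two `r_i` are adjacent. -/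
def ExpGraph {V : Type*} (G : SimpleGraph V) (r : V) (R : ℕ) :
    SimpleGraph (ExpVert V r R) where
  Adj x y := G.Adj (expProj x) (expProj y)
  symm := ⟨fun _ _ h => G.symm.symm _ _ h⟩
  loopless := ⟨fun _ h => G.loopless.irrefl _ h⟩

lemma expEdge_iff {V : Type*} (G : SimpleGraph V) (r : V) (R : ℕ)
    (z : Sym2 (ExpVert V r R)) :
    z ∈ (ExpGraph G r R).edgeSet ↔ Sym2.map expProj z ∈ G.edgeSet := by
  induction z using Sym2.ind with
  | _ x y => simp [ExpGraph, SimpleGraph.mem_edgeSet]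

lemma expProj_eq_r {V : Type*} {r : V} {R : ℕ} (w : ExpVert V r R) :
    expProj w = r ↔ ∃ i : Fin R, w = Sum.inr i := by
  cases w with
  | inl u => simp [expProj, u.2]
  | inr i => simp [expProj]

/-- for a set `F` of edges of `G`, the following are equivalent:
(a) no two distinct edges of `F` share a vertex other than `r` and at most `R`
edges of `F` contain `r`; (b) there is a matching `M` of the expanded graph
`G'` on which `π` (extended to edges) is injective with image `F`. -/
theorem eNB_expansion_equiv {V : Type*} [DecidableEq V]
    (G : SimpleGraph V) (r : V) (R : ℕ) (hR : 1 ≤ R)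
    (F : Finset (Sym2 V)) (hF : ∀ e ∈ F, e ∈ G.edgeSet) :
    ((∀ e ∈ F, ∀ f ∈ F, e ≠ f → ∀ v, v ∈ e → v ∈ f → v = r) ∧
        (F.filter (fun e => r ∈ e)).card ≤ R) ↔
      ∃ M : Finset (Sym2 (ExpVert V r R)),
        (∀ e ∈ M, e ∈ (ExpGraph G r R).edgeSet) ∧
        (∀ e ∈ M, ∀ f ∈ M, e ≠ f → ∀ v, v ∈ e → v ∉ f) ∧
        Set.InjOn (Sym2.map expProj) (M : Set (Sym2 (ExpVert V r R))) ∧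
        F = M.image (Sym2.map expProj) := by
  classical
  haveI : Nonempty (Fin R) := ⟨⟨0, hR⟩⟩
  constructor
  · rintro ⟨hdisj, hcard⟩
    set Fr := F.filter (fun e => r ∈ e) with hFrdef
    have hcard' : Fintype.card {e // e ∈ Fr} ≤ Fintype.card (Fin R) := by
      simpa [Fintype.card_coe] using hcard
    obtain ⟨ι⟩ : Nonempty ({e // e ∈ Fr} ↪ Fin R) :=
      Function.Embedding.nonempty_iff_card_le.mpr hcard'
    -- vertex lifting
    set g0 : V → ExpVert V r R := fun v =>
      if h : v = r then Sum.inr ⟨0, hR⟩ else Sum.inl ⟨v, h⟩ with hg0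
    have hπg0 : ∀ v, expProj (g0 v) = v := by
      intro v
      by_cases h : v = r <;> simp [hg0, h, expProj]
    -- edge lifting
    set L : {e // e ∈ F} → Sym2 (ExpVert V r R) := fun e =>
      if h : r ∈ e.1 then
        s(Sum.inr (ι ⟨e.1, by simp [hFrdef, e.2, h]⟩), g0 (Sym2.Mem.other' h))
      else Sym2.map g0 e.1 with hL
    have hπL : ∀ e, Sym2.map expProj (L e) = e.1 := by
      intro e
      by_cases h : r ∈ e.1
      · rw [hL]
        simp only [dif_pos h]
        rw [Sym2.map_pair_eq, hπg0]
        exact Sym2.other_spec' h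
      · rw [hL]
        simp only [dif_neg h]
        rw [Sym2.map_map]
        have : expProj ∘ g0 = id := funext hπg0
        rw [this, Sym2.map_id, id]
    -- other' is never r for edges of G
    have hother : ∀ (e : {e // e ∈ F}) (h : r ∈ e.1), Sym2.Mem.other' h ≠ r := by
      intro e h heq
      have hd : ¬ e.1.IsDiag := G.not_isDiag_of_mem_edgeSet (hF _ e.2)
      have := Sym2.other_ne hd h
      rw [Sym2.other_eq_other'] at this
      exact this heq
    -- membership structure of L e
    have hmemL : ∀ (e : {e // e ∈ F}) (w : ExpVert V r R), w ∈ L e →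
        expProj w ∈ e.1 := by
      intro e w hw
      rw [← hπL e]
      exact Sym2.mem_map.mpr ⟨w, hw, rfl⟩
    have hinrL : ∀ (e : {e // e ∈ F}) (i : Fin R), Sum.inr i ∈ L e →
        ∃ h : r ∈ e.1, i = ι ⟨e.1, by simp [hFrdef, e.2, h]⟩ := by
      intro e i hi
      by_cases h : r ∈ e.1
      · refine ⟨h, ?_⟩
        rw [hL] at hi
        simp only [dif_pos h, Sym2.mem_iff] at hi
        rcases hi with hi | hi
        · exact (Sum.inr.injEq _ _ ▸ hi : _)
        · exfalso
          have hne := hother e h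
          rw [hg0] at hi
          simp [dif_neg hne] at hi
      · exfalso
        rw [hL] at hi
        simp only [dif_neg h] at hi
        obtain ⟨a, ha, hag⟩ := Sym2.mem_map.mp hi
        have har : a ≠ r := fun hc => h (hc ▸ ha)
        rw [hg0] at hag
        simp [dif_neg har] at hag
    refine ⟨F.attach.image L, ?_, ?_, ?_, ?_⟩
    · intro z hz
      obtain ⟨e, _, rfl⟩ := Finset.mem_image.mp hz
      rw [expEdge_iff, hπL]
      exact hF _ e.2
    · intro z hz w hw hzw v hvz hvw
      obtain ⟨e, _, rfl⟩ := Finset.mem_image.mp hz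
      obtain ⟨f, _, rfl⟩ := Finset.mem_image.mp hw
      have hef : e ≠ f := fun hc => hzw (hc ▸ rfl)
      have hef1 : e.1 ≠ f.1 := fun hc => hef (Subtype.ext hc)
      have h1 := hmemL e v hvz
      have h2 := hmemL f v hvw
      have hvr : expProj v = r := hdisj _ e.2 _ f.2 hef1 _ h1 h2
      obtain ⟨i, rfl⟩ := (expProj_eq_r v).mp hvr
      obtain ⟨he, hie⟩ := hinrL e i hvz
      obtain ⟨hf, hif⟩ := hinrL f i hvw
      have : (⟨e.1, by simp [hFrdef, e.2, he]⟩ : {e // e ∈ Fr}) =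
          ⟨f.1, by simp [hFrdef, f.2, hf]⟩ := ι.injective (hie ▸ hif)
      simp only [Subtype.mk.injEq] at this
      exact hef1 this
    · intro z hz w hw hzw
      simp only [Finset.coe_image, Set.mem_image] at hz hw
      obtain ⟨e, he, rfl⟩ := hz
      obtain ⟨f, hf, rfl⟩ := hw
      rw [hπL, hπL] at hzw
      exact congrArg L (Subtype.ext hzw)
    · rw [Finset.image_image]
      have : (Sym2.map expProj) ∘ L = fun e => e.1 := funext hπL
      rw [this, Finset.attach_image_val]
  · rintro ⟨M, hMedge, hMmatch, hMinj, rfl⟩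
    have hpre : ∀ e ∈ M.image (Sym2.map expProj), ∃ e' ∈ M,
        Sym2.map expProj e' = e := fun e he => by
      obtain ⟨e', h1, h2⟩ := Finset.mem_image.mp he; exact ⟨e', h1, h2⟩
    constructor
    · intro e he f hf hef v hve hvf
      by_contra hvr
      obtain ⟨e', he', rfl⟩ := hpre e he
      obtain ⟨f', hf', rfl⟩ := hpre f hf
      have hef' : e' ≠ f' := fun hc => hef (hc ▸ rfl)
      obtain ⟨w1, hw1, hw1p⟩ := Sym2.mem_map.mp hve
      obtain ⟨w2, hw2, hw2p⟩ := Sym2.mem_map.mp hvf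
      have hwl : ∀ w : ExpVert V r R, expProj w = v → w = Sum.inl ⟨v, hvr⟩ := by
        intro w hw
        cases w with
        | inl u => exact congrArg Sum.inl (Subtype.ext hw)
        | inr i => exact absurd hw.symm hvr
      have hw12 : w1 = w2 := (hwl w1 hw1p).trans (hwl w2 hw2p).symm
      exact hMmatch e' he' f' hf' hef' w1 hw1 (hw12 ▸ hw2)
    · have key : ∀ e ∈ (M.image (Sym2.map expProj)).filter (fun e => r ∈ e),
          ∃ i : Fin R, ∃ e' , e' ∈ M ∧ Sym2.map expProj e' = e ∧ Sum.inr i ∈ e' := by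
        intro e he
        obtain ⟨he, hre⟩ := Finset.mem_filter.mp he
        obtain ⟨e', he', rfl⟩ := hpre e he
        obtain ⟨w, hw, hwp⟩ := Sym2.mem_map.mp hre
        obtain ⟨i, rfl⟩ := (expProj_eq_r w).mp hwp
        exact ⟨i, e', he', rfl, hw⟩
      haveI : Nonempty (Sym2 (ExpVert V r R)) := ⟨s(Sum.inr ⟨0, hR⟩, Sum.inr ⟨0, hR⟩)⟩
      choose! ix e' hM hπ hmem using key
      calc ((M.image (Sym2.map expProj)).filter (fun e => r ∈ e)).card
          ≤ (Finset.univ : Finset (Fin R)).card := by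
            apply Finset.card_le_card_of_injOn ix (fun _ _ => Finset.mem_univ _)
            intro a ha b hb hab
            by_contra hne
            have hab' : e' a ≠ e' b := fun hc =>
              hne ((hπ a ha).symm.trans (hc ▸ hπ b hb))
            exact hMmatch _ (hM a ha) _ (hM b hb) hab' _ (hmem a ha)
              (hab ▸ hmem b hb)
        _ = R := by simp
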